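/- Let ψ₀, ψ₁ : (0,∞) → ℝ be C² with ψ₀''(s) < 0, ψ₁''(s) ≤ 0, ψ₁'(s) ≥ 0 for all s > 0, and C₁ ≤ −sψ₀''(s) ≤ C₂ for all s > 0. Let ψ₂(b) ≥ 0 for all b > 0. Define η(θ,b) := −ψ₀'(θ) − ψ₁'(θ)ψ₂(b). Then for all θ > 0 and b > 0, η(θ,b) ≤ −C₁ |ln θ| + C(1 + θ), where C := max(C₁ + C₂, |ψ₀'(1)|). -/

import Mathlib

lemma aux_integral_bound (ψ₀' ψ₀'' : ℝ → ℝ) {C₁ C₂ : ℝ}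
    (hd02 : ∀ s > (0:ℝ), HasDerivAt ψ₀' (ψ₀'' s) s)
    (hc0 : ContinuousOn ψ₀'' (Set.Ioi 0))
    (hbound : ∀ s > (0:ℝ), C₁ ≤ -s * ψ₀'' s ∧ -s * ψ₀'' s ≤ C₂)
    {a b : ℝ} (ha : 0 < a) (hab : a ≤ b) :
    -C₂ * Real.log (b/a) ≤ ψ₀' b - ψ₀' a ∧
      ψ₀' b - ψ₀' a ≤ -C₁ * Real.log (b/a) := by
  have hsub : Set.uIcc a b ⊆ Set.Ioi 0 := by
    rw [Set.uIcc_of_le hab]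
    intro x hx
    exact lt_of_lt_of_le ha hx.1
  have h0 : (0:ℝ) ∉ Set.uIcc a b := fun h => lt_irrefl 0 (Set.mem_Ioi.mp (hsub h))
  have hint : IntervalIntegrable ψ₀'' MeasureTheory.volume a b :=
    (hc0.mono hsub).intervalIntegrable
  have heq : ∫ s in a..b, ψ₀'' s = ψ₀' b - ψ₀' a :=
    intervalIntegral.integral_eq_sub_of_hasDerivAt
      (fun s hs => hd02 s (hsub hs)) hint
  have hcinv : ContinuousOn (fun s : ℝ => s⁻¹) (Set.uIcc a b) :=
    ContinuousOn.inv₀ continuousOn_id (fun x hx => ne_of_gt (hsub hx))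
  have hintlo : IntervalIntegrable (fun s : ℝ => -C₂ * s⁻¹) MeasureTheory.volume a b :=
    ((continuousOn_const.mul hcinv)).intervalIntegrable
  have hinthi : IntervalIntegrable (fun s : ℝ => -C₁ * s⁻¹) MeasureTheory.volume a b :=
    ((continuousOn_const.mul hcinv)).intervalIntegrable
  have hinv : ∫ s in a..b, s⁻¹ = Real.log (b/a) := integral_inv h0
  constructor
  · have hmono : ∫ s in a..b, (-C₂ * s⁻¹) ≤ ∫ s in a..b, ψ₀'' s := by
      apply intervalIntegral.integral_mono_on hab hintlo hint
      intro s hs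
      have hs0 : 0 < s := hsub (Set.Icc_subset_uIcc hs)
      have h2 := (hbound s hs0).2
      have h3 := mul_le_mul_of_nonneg_right h2 (inv_nonneg.mpr hs0.le)
      have h4 : -s * ψ₀'' s * s⁻¹ = -ψ₀'' s := by field_simp
      rw [h4] at h3
      linarith
    rw [heq, intervalIntegral.integral_const_mul, hinv] at hmono
    linarith
  · have hmono : ∫ s in a..b, ψ₀'' s ≤ ∫ s in a..b, (-C₁ * s⁻¹) := by
      apply intervalIntegral.integral_mono_on hab hint hinthi
      intro s hs
      have hs0 : 0 < s := hsub (Set.Icc_subset_uIcc hs)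
      have h1 := (hbound s hs0).1
      have h3 := mul_le_mul_of_nonneg_right h1 (inv_nonneg.mpr hs0.le)
      have h4 : -s * ψ₀'' s * s⁻¹ = -ψ₀'' s := by field_simp
      rw [h4] at h3
      linarith
    rw [heq, intervalIntegral.integral_const_mul, hinv] at hmono
    linarith

/-- Lemma 2.1 of the paper: the entropy `η(θ,b) = -ψ₀'(θ) - ψ₁'(θ)ψ₂(b)`
satisfies `η(θ,b) ≤ -C₁|log θ| + C(1+θ)` with `C = max (C₁+C₂) |ψ₀'(1)|`. -/
theorem stmt7 (ψ₀ ψ₀' ψ₀'' ψ₁ ψ₁' ψ₁'' ψ₂ : ℝ → ℝ) (C₁ C₂ : ℝ)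
    (hC₁ : 0 < C₁) (hC₂ : 0 < C₂)
    (hd01 : ∀ s > (0:ℝ), HasDerivAt ψ₀ (ψ₀' s) s)
    (hd02 : ∀ s > (0:ℝ), HasDerivAt ψ₀' (ψ₀'' s) s)
    (hd11 : ∀ s > (0:ℝ), HasDerivAt ψ₁ (ψ₁' s) s)
    (hd12 : ∀ s > (0:ℝ), HasDerivAt ψ₁' (ψ₁'' s) s)
    (hc0 : ContinuousOn ψ₀'' (Set.Ioi 0))
    (h0conc : ∀ s > (0:ℝ), ψ₀'' s < 0)
    (h1conc : ∀ s > (0:ℝ), ψ₁'' s ≤ 0)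
    (h1mono : ∀ s > (0:ℝ), 0 ≤ ψ₁' s)
    (hψ₂ : ∀ b > (0:ℝ), 0 ≤ ψ₂ b)
    (hbound : ∀ s > (0:ℝ), C₁ ≤ -s * ψ₀'' s ∧ -s * ψ₀'' s ≤ C₂) :
    ∀ θ > (0:ℝ), ∀ b > (0:ℝ),
      -ψ₀' θ - ψ₁' θ * ψ₂ b ≤
        -C₁ * |Real.log θ| + max (C₁ + C₂) |ψ₀' 1| * (1 + θ) := by
  intro θ hθ b hb
  set C := max (C₁ + C₂) |ψ₀' 1| with hCdef
  have hC12 : C₁ + C₂ ≤ C := le_max_left _ _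
  have hCa : |ψ₀' 1| ≤ C := le_max_right _ _
  have hC0 : 0 ≤ C := le_trans (by linarith) hC12
  have hprod : 0 ≤ ψ₁' θ * ψ₂ b := mul_nonneg (h1mono θ hθ) (hψ₂ b hb)
  have key : -ψ₀' θ ≤ -C₁ * |Real.log θ| + C * (1 + θ) := by
    rcases le_total 1 θ with h1θ | h1θ
    · -- θ ≥ 1
      have hlog0 : 0 ≤ Real.log θ := Real.log_nonneg h1θ
      have habs : |Real.log θ| = Real.log θ := abs_of_nonneg hlog0
      have h := (aux_integral_bound ψ₀' ψ₀'' hd02 hc0 hbound one_pos h1θ).1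
      rw [div_one] at h
      have hlogθ : Real.log θ ≤ θ - 1 := Real.log_le_sub_one_of_pos hθ
      have h1 : -ψ₀' 1 ≤ |ψ₀' 1| := neg_le_abs _
      rw [habs]
      nlinarith [mul_le_mul_of_nonneg_left hlogθ (by linarith : (0:ℝ) ≤ C₁ + C₂)]
    · -- θ ≤ 1
      have hlog0 : Real.log θ ≤ 0 := Real.log_nonpos (le_of_lt hθ) h1θ
      have habs : |Real.log θ| = -Real.log θ := abs_of_nonpos hlog0
      have h := (aux_integral_bound ψ₀' ψ₀'' hd02 hc0 hbound hθ h1θ).2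
      rw [one_div, Real.log_inv] at h
      have h1 : -ψ₀' 1 ≤ |ψ₀' 1| := neg_le_abs _
      rw [habs]
      nlinarith [mul_nonneg hC0 (le_of_lt hθ)]
  linarith
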